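/- arXiv:2510.06115 — 3 statements merged into one kernel-verified Lean document; each statement's English description precedes it below -/
import Mathlib

section
/- Let f : M → ℝ be self-concordant on an open convex set M ⊆ ℝⁿ, with minimizer z ∈ M and f(z) = 0, and let ‖·‖_z be the local norm induced by the Hessian at z. If ‖x - z‖_z < 1, then f(x) ≥ ¼‖x - z‖_z²; consequently, by convexity, f(x) ≥ ¼ whenever ‖x - z‖_z ≥ 1. -/
/-- The Hessian quadratic/bilinear form `D²f_x[u,v]` via the second iterated Fréchet
derivative. -/
noncomputable def hessBilin {n : ℕ} (f : (Fin n → ℝ) → ℝ) (x u v : Fin n → ℝ) : ℝ :=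
  iteratedFDeriv ℝ 2 f x ![u, v]

lemma hess_smul {n : ℕ} (f : (Fin n → ℝ) → ℝ) (y w : Fin n → ℝ) (a : ℝ) :
    hessBilin f y (a • w) (a • w) = a ^ 2 * hessBilin f y w w := by
  unfold hessBilin
  have h : ![a • w, a • w] = fun i => (fun _ : Fin 2 => a) i • (![w, w] i) := by
    funext i; fin_cases i <;> rfl
  rw [h, ContinuousMultilinearMap.map_smul_univ]
  simp [smul_eq_mul, sq]

lemma hess_zero {n : ℕ} (f : (Fin n → ℝ) → ℝ) (y : Fin n → ℝ) :
    hessBilin f y 0 0 = 0 := by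
  unfold hessBilin
  exact ContinuousMultilinearMap.map_coord_zero _ (0 : Fin 2) rfl

section deriv
variable {n : ℕ} {f : (Fin n → ℝ) → ℝ} {z u : Fin n → ℝ}

lemma hasDerivAt_line (s : ℝ) : HasDerivAt (fun s : ℝ => z + s • u) u s := by
  simpa using ((hasDerivAt_id s).smul_const u).const_add z

lemma hd1 {s : ℝ} (hfs : ContDiffAt ℝ 3 f (z + s • u)) :
    HasDerivAt (fun s : ℝ => f (z + s • u)) (fderiv ℝ f (z + s • u) u) s := by
  have hfd : DifferentiableAt ℝ f (z + s • u) := hfs.differentiableAt (by norm_num)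
  exact hfd.hasFDerivAt.comp_hasDerivAt s (hasDerivAt_line s)

lemma hd2 {s : ℝ} (hfs : ContDiffAt ℝ 3 f (z + s • u)) :
    HasDerivAt (fun s : ℝ => fderiv ℝ f (z + s • u) u)
      (hessBilin f (z + s • u) u u) s := by
  have h2 : ContDiffAt ℝ 2 (fderiv ℝ f) (z + s • u) := hfs.fderiv_right (by norm_num)
  have hdf : DifferentiableAt ℝ (fderiv ℝ f) (z + s • u) := h2.differentiableAt (by norm_num)
  have h3 : HasDerivAt (fun s : ℝ => fderiv ℝ f (z + s • u))
      (fderiv ℝ (fderiv ℝ f) (z + s • u) u) s :=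
    hdf.hasFDerivAt.comp_hasDerivAt s (hasDerivAt_line s)
  have h4 := (ContinuousLinearMap.apply ℝ ℝ u).hasFDerivAt.comp_hasDerivAt s h3
  have he : hessBilin f (z + s • u) u u = fderiv ℝ (fderiv ℝ f) (z + s • u) u u := by
    unfold hessBilin
    rw [iteratedFDeriv_two_apply]
    simp
  rw [he]
  exact h4

lemma hd3 {s : ℝ} (hfs : ContDiffAt ℝ 3 f (z + s • u)) :
    HasDerivAt (fun s : ℝ => hessBilin f (z + s • u) u u)
      (iteratedFDeriv ℝ 3 f (z + s • u) (fun _ => u)) s := by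
  have h2 : ContDiffAt ℝ 1 (iteratedFDeriv ℝ 2 f) (z + s • u) :=
    hfs.iteratedFDeriv_right (by norm_num)
  have hdf : DifferentiableAt ℝ (iteratedFDeriv ℝ 2 f) (z + s • u) :=
    h2.differentiableAt (by norm_num)
  have h3 : HasDerivAt (fun s : ℝ => iteratedFDeriv ℝ 2 f (z + s • u))
      (fderiv ℝ (iteratedFDeriv ℝ 2 f) (z + s • u) u) s :=
    hdf.hasFDerivAt.comp_hasDerivAt s (hasDerivAt_line s)
  have h4 := (ContinuousMultilinearMap.apply ℝ (fun _ : Fin 2 => (Fin n → ℝ)) ℝ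
      ![u, u]).hasFDerivAt.comp_hasDerivAt s h3
  have he : iteratedFDeriv ℝ 3 f (z + s • u) (fun _ => u)
      = fderiv ℝ (iteratedFDeriv ℝ 2 f) (z + s • u) u ![u, u] := by
    have h5 : (fun _ : Fin 3 => u) = Matrix.vecCons u ![u, u] := by
      funext i; fin_cases i <;> rfl
    rw [h5, iteratedFDeriv_succ_apply_left]
    rfl
  rw [he]
  exact h4

end deriv

open Set in
lemma part1 {n : ℕ} {M : Set (Fin n → ℝ)} (hM : IsOpen M)
    {f : (Fin n → ℝ) → ℝ}
    (hf : ∀ x ∈ M, ContDiffAt ℝ 3 f x)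
    (hpd : ∀ x ∈ M, ∀ u : Fin n → ℝ, u ≠ 0 → 0 < hessBilin f x u u)
    (hsc : ∀ x ∈ M, ∀ u : Fin n → ℝ,
      |iteratedFDeriv ℝ 3 f x (fun _ => u)| ≤ 2 * hessBilin f x u u ^ ((3 : ℝ) / 2))
    (hdikin : ∀ x ∈ M, ∀ y : Fin n → ℝ,
      Real.sqrt (hessBilin f x (y - x) (y - x)) < 1 → y ∈ M)
    {z : Fin n → ℝ} (hz : z ∈ M) (hmin : ∀ x ∈ M, f z ≤ f x) (hfz : f z = 0)
    {x : Fin n → ℝ} (hx : x ∈ M)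
    (hlt : Real.sqrt (hessBilin f z (x - z) (x - z)) < 1) :
    (1 / 4) * hessBilin f z (x - z) (x - z) ≤ f x := by
  by_cases hxz : x = z
  · subst hxz
    rw [sub_self, hess_zero, hfz]; norm_num
  have hune : x - z ≠ 0 := sub_ne_zero.mpr hxz
  set u : Fin n → ℝ := x - z with hu
  set Q : ℝ := hessBilin f z u u with hQdef
  have hQ : 0 < Q := hpd z hz u hune
  set t : ℝ := Real.sqrt Q with htdef
  have ht : 0 < t := Real.sqrt_pos.mpr hQ
  have ht1 : t < 1 := hlt
  have htQ : t ^ 2 = Q := Real.sq_sqrt hQ.le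
  -- membership along the segment
  have hIcc : ∀ s ∈ Icc (0:ℝ) 1, z + s • u ∈ M := by
    intro s hs
    apply hdikin z hz
    have h1 : z + s • u - z = s • u := by abel
    rw [h1, hess_smul, ← hQdef, Real.sqrt_mul (sq_nonneg s), Real.sqrt_sq_eq_abs, ← htdef,
      abs_of_nonneg hs.1]
    nlinarith [hs.1, hs.2, ht.le]
  set A : ℝ → ℝ := fun s => hessBilin f (z + s • u) u u with hAdef
  set P1 : ℝ → ℝ := fun s => fderiv ℝ f (z + s • u) u with hP1def
  have hApos : ∀ s ∈ Icc (0:ℝ) 1, 0 < A s := fun s hs => hpd _ (hIcc s hs) u hune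
  have hA0 : A 0 = Q := by simp only [hAdef, zero_smul, add_zero]; rfl
  set ψ : ℝ → ℝ := fun s => A s ^ (-(1/2) : ℝ) with hψdef
  have hψd : ∀ s ∈ Icc (0:ℝ) 1, HasDerivAt ψ
      ((-(1/2) * A s ^ ((-(1/2) : ℝ) - 1)) * iteratedFDeriv ℝ 3 f (z + s • u) (fun _ => u)) s :=
    fun s hs => (Real.hasDerivAt_rpow_const (Or.inl (hApos s hs).ne')).comp s
      (hd3 (hf _ (hIcc s hs)))
  have hψ'le : ∀ s ∈ Icc (0:ℝ) 1,
      (-(1/2) * A s ^ ((-(1/2) : ℝ) - 1)) * iteratedFDeriv ℝ 3 f (z + s • u) (fun _ => u) ≤ 1 := by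
    intro s hs
    have ha : 0 < A s := hApos s hs
    have h32 : (0:ℝ) < A s ^ ((3:ℝ)/2) := Real.rpow_pos_of_pos ha _
    have hneg : A s ^ ((-(1/2) : ℝ) - 1) = (A s ^ ((3:ℝ)/2))⁻¹ := by
      rw [← Real.rpow_neg ha.le]; norm_num
    have hT := hsc _ (hIcc s hs) u
    have hT1 : -(2 * A s ^ ((3:ℝ)/2)) ≤ iteratedFDeriv ℝ 3 f (z + s • u) (fun _ => u) :=
      neg_le_of_abs_le hT
    rw [hneg]
    have hinv : A s ^ ((3:ℝ)/2) * (A s ^ ((3:ℝ)/2))⁻¹ = 1 := mul_inv_cancel₀ h32.ne'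
    nlinarith [inv_pos.mpr h32]
  -- ψ s ≤ s + 1/t
  have hψmono : MonotoneOn (fun s => s - ψ s) (Icc (0:ℝ) 1) := by
    apply monotoneOn_of_deriv_nonneg (convex_Icc 0 1)
    · exact fun s hs => ((hasDerivAt_id s).sub (hψd s hs)).continuousAt.continuousWithinAt
    · intro s hs; rw [interior_Icc] at hs
      exact ((hasDerivAt_id s).sub (hψd s (Ioo_subset_Icc_self hs))).differentiableAt.differentiableWithinAt
    · intro s hs; rw [interior_Icc] at hs
      have hder : HasDerivAt (fun s' : ℝ => s' - ψ s')
          (1 - (-(1/2) * A s ^ ((-(1/2) : ℝ) - 1) *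
            iteratedFDeriv ℝ 3 f (z + s • u) (fun _ => u))) s :=
        (hasDerivAt_id s).sub (hψd s (Ioo_subset_Icc_self hs))
      rw [hder.deriv]
      have := hψ'le s (Ioo_subset_Icc_self hs)
      linarith
  have hψ0 : ψ 0 = t⁻¹ := by
    rw [hψdef]
    simp only [hA0, ← htQ]
    rw [← Real.rpow_natCast t 2, ← Real.rpow_mul ht.le]
    norm_num [Real.rpow_neg_one]
  have hψle : ∀ s ∈ Icc (0:ℝ) 1, ψ s ≤ s + t⁻¹ := by
    intro s hs
    have := hψmono (left_mem_Icc.mpr (by norm_num)) hs hs.1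
    simp only [sub_zero] at this
    rw [← hψ0]
    linarith [this]
  -- lower bound on A
  have hAlb : ∀ s ∈ Icc (0:ℝ) 1, t^2/(1+t*s)^3 ≤ A s := by
    intro s hs
    have ha : 0 < A s := hApos s hs
    have hψpos : 0 < ψ s := Real.rpow_pos_of_pos ha _
    have hvpos : 0 < s + t⁻¹ := add_pos_of_nonneg_of_pos hs.1 (inv_pos.mpr ht)
    have hsq : ψ s ^ 2 ≤ (s + t⁻¹) ^ 2 := by nlinarith [hψle s hs]
    have hψ2 : ψ s ^ 2 = (A s)⁻¹ := by
      rw [hψdef]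
      rw [← Real.rpow_natCast (A s ^ (-(1/2) : ℝ)) 2, ← Real.rpow_mul ha.le]
      norm_num [Real.rpow_neg_one]
    have h1 : (A s)⁻¹ ≤ (s + t⁻¹) ^ 2 := hψ2 ▸ hsq
    have h2 : ((s + t⁻¹) ^ 2)⁻¹ ≤ A s := by
      rw [← inv_inv (A s)]
      exact inv_anti₀ (inv_pos.mpr ha) h1
    have hv : s + t⁻¹ = (1+t*s)/t := by
      field_simp [ht.ne']
      ring
    have h3 : ((s + t⁻¹) ^ 2)⁻¹ = t^2/(1+t*s)^2 := by
      rw [hv, div_pow, inv_div]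
    have hb : (1:ℝ) ≤ 1 + t*s := by nlinarith [hs.1, ht.le]
    have h4 : t^2/(1+t*s)^3 ≤ t^2/(1+t*s)^2 := by
      apply div_le_div_of_nonneg_left (sq_nonneg t)
        (pow_pos (lt_of_lt_of_le zero_lt_one hb) 2)
      exact pow_le_pow_right₀ hb (by norm_num)
    rw [h3] at h2
    linarith
  -- comparison functions
  have hdenpos : ∀ s ∈ Icc (0:ℝ) 1, (0:ℝ) < 1 + t*s := by
    intro s hs; nlinarith [hs.1, ht.le]
  set h0 : ℝ → ℝ := fun s => t^2 * s^2 / (2*(1+t*s)) with hh0def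
  set h1f : ℝ → ℝ := fun s => (2*t^2*s + t^3*s^2) / (2*(1+t*s)^2) with hh1def
  have hh0d : ∀ s ∈ Icc (0:ℝ) 1, HasDerivAt h0 (h1f s) s := by
    intro s hs
    have hd : (0:ℝ) < 1 + t*s := hdenpos s hs
    have hnum : HasDerivAt (fun s : ℝ => t^2 * s^2) (t^2 * (2*s)) s := by
      have := (hasDerivAt_pow 2 s).const_mul (t^2)
      simpa using this
    have hden' : HasDerivAt (fun s : ℝ => 2*(1+t*s)) (2*t) s := by
      have := (((hasDerivAt_id s).const_mul t).const_add (1:ℝ)).const_mul (2:ℝ)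
      simpa using this
    have := hnum.div hden' (by positivity)
    refine HasDerivAt.congr_deriv (f := h0) this ?_
    rw [hh1def]
    beta_reduce
    have hd' := hd.ne'
    field_simp
    ring
  have hh1d : ∀ s ∈ Icc (0:ℝ) 1, HasDerivAt h1f (t^2/(1+t*s)^3) s := by
    intro s hs
    have hd : (0:ℝ) < 1 + t*s := hdenpos s hs
    have hnum : HasDerivAt (fun s : ℝ => 2*t^2*s + t^3*s^2) (2*t^2 + t^3*(2*s)) s := by
      have h1 := (hasDerivAt_id s).const_mul (2*t^2)
      have h2 := (hasDerivAt_pow 2 s).const_mul (t^3)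
      have := h1.add h2
      refine this.congr_deriv ?_
      norm_num
    have hden' : HasDerivAt (fun s : ℝ => 2*(1+t*s)^2) (2*(2*(1+t*s)*t)) s := by
      have hin : HasDerivAt (fun s : ℝ => 1+t*s) t s := by
        have := ((hasDerivAt_id s).const_mul t).const_add (1:ℝ)
        simpa using this
      have := (hin.pow 2).const_mul (2:ℝ)
      simpa [mul_comm, mul_assoc, mul_left_comm] using this
    have := hnum.div hden' (by positivity)
    refine HasDerivAt.congr_deriv (f := h1f) this ?_
    have hd' := hd.ne'
    field_simp
    ring
  -- derivative of f at z vanishes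
  have hfd0 : fderiv ℝ f z = 0 := by
    apply IsLocalMin.fderiv_eq_zero
    exact Filter.eventually_of_mem (hM.mem_nhds hz) (fun y hy => hmin y hy)
  have hP10 : P1 0 = 0 := by
    rw [hP1def]
    simp only [zero_smul, add_zero, hfd0]
    rfl
  -- first monotone: P1 - h1f
  have hG1d : ∀ s ∈ Icc (0:ℝ) 1, HasDerivAt (fun s => P1 s - h1f s) (A s - t^2/(1+t*s)^3) s :=
    fun s hs => (hd2 (hf _ (hIcc s hs))).sub (hh1d s hs)
  have hG1mono : MonotoneOn (fun s => P1 s - h1f s) (Icc (0:ℝ) 1) := by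
    apply monotoneOn_of_deriv_nonneg (convex_Icc 0 1)
    · exact fun s hs => (hG1d s hs).continuousAt.continuousWithinAt
    · intro s hs; rw [interior_Icc] at hs
      exact (hG1d s (Ioo_subset_Icc_self hs)).differentiableAt.differentiableWithinAt
    · intro s hs; rw [interior_Icc] at hs
      rw [(hG1d s (Ioo_subset_Icc_self hs)).deriv]
      have := hAlb s (Ioo_subset_Icc_self hs)
      linarith
  have hG1nonneg : ∀ s ∈ Icc (0:ℝ) 1, 0 ≤ P1 s - h1f s := by
    intro s hs
    have h00 : P1 0 - h1f 0 = 0 := by rw [hP10, hh1def]; norm_num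
    have hm : P1 0 - h1f 0 ≤ P1 s - h1f s :=
      hG1mono (left_mem_Icc.mpr (by norm_num)) hs hs.1
    linarith
  -- second monotone: f∘c - h0
  have hG0d : ∀ s ∈ Icc (0:ℝ) 1, HasDerivAt (fun s => f (z + s • u) - h0 s) (P1 s - h1f s) s :=
    fun s hs => (hd1 (hf _ (hIcc s hs))).sub (hh0d s hs)
  have hG0mono : MonotoneOn (fun s => f (z + s • u) - h0 s) (Icc (0:ℝ) 1) := by
    apply monotoneOn_of_deriv_nonneg (convex_Icc 0 1)
    · exact fun s hs => (hG0d s hs).continuousAt.continuousWithinAt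
    · intro s hs; rw [interior_Icc] at hs
      exact (hG0d s (Ioo_subset_Icc_self hs)).differentiableAt.differentiableWithinAt
    · intro s hs; rw [interior_Icc] at hs
      rw [(hG0d s (Ioo_subset_Icc_self hs)).deriv]
      exact hG1nonneg s (Ioo_subset_Icc_self hs)
  have hfin : f (z + (0:ℝ) • u) - h0 0 ≤ f (z + (1:ℝ) • u) - h0 1 :=
    hG0mono (left_mem_Icc.mpr (by norm_num)) (right_mem_Icc.mpr (by norm_num)) (by norm_num)
  have hc0 : z + (0:ℝ) • u = z := by rw [zero_smul, add_zero]
  have hc1 : z + (1:ℝ) • u = x := by rw [one_smul, hu]; abel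
  rw [hc0, hc1, hfz] at hfin
  have hh00 : h0 0 = 0 := by rw [hh0def]; norm_num
  have hh01 : h0 1 = t^2/(2*(1+t)) := by rw [hh0def]; norm_num
  rw [hh00, hh01] at hfin
  -- final numeric step
  have h24 : 2*(1+t) ≤ 4 := by linarith
  have hposd : (0:ℝ) < 2*(1+t) := by linarith
  have hfinal : t^2/4 ≤ t^2/(2*(1+t)) := div_le_div_of_nonneg_left (sq_nonneg t) hposd h24
  have hQt : (1/4) * Q = t^2/4 := by rw [htQ]; ring
  rw [hQt]
  linarith

/-- Let `f` be self-concordant on an open convex `M ⊆ ℝⁿ` with minimizer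
`z ∈ M` and `f(z) = 0`, and let `‖u‖_z = √(D²f_z[u,u])` be the local norm at `z`. Then
`f(x) ≥ ¼‖x-z‖_z²` whenever `‖x-z‖_z < 1`, and `f(x) ≥ ¼` whenever `‖x-z‖_z ≥ 1`. -/
theorem stmt_8 (n : ℕ) (M : Set (Fin n → ℝ)) (hM : IsOpen M) (hMconv : Convex ℝ M)
    (f : (Fin n → ℝ) → ℝ)
    (hf : ∀ x ∈ M, ContDiffAt ℝ 3 f x)
    (hconv : ConvexOn ℝ M f)
    (hpd : ∀ x ∈ M, ∀ u : Fin n → ℝ, u ≠ 0 → 0 < hessBilin f x u u)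
    (hsc : ∀ x ∈ M, ∀ u : Fin n → ℝ,
      |iteratedFDeriv ℝ 3 f x (fun _ => u)| ≤ 2 * hessBilin f x u u ^ ((3 : ℝ) / 2))
    (hdikin : ∀ x ∈ M, ∀ y : Fin n → ℝ,
      Real.sqrt (hessBilin f x (y - x) (y - x)) < 1 → y ∈ M)
    (z : Fin n → ℝ) (hz : z ∈ M) (hmin : ∀ x ∈ M, f z ≤ f x) (hfz : f z = 0) :
    (∀ x ∈ M, Real.sqrt (hessBilin f z (x - z) (x - z)) < 1 →
        (1 / 4) * hessBilin f z (x - z) (x - z) ≤ f x) ∧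
    (∀ x ∈ M, 1 ≤ Real.sqrt (hessBilin f z (x - z) (x - z)) → (1 / 4 : ℝ) ≤ f x) := by
  constructor
  · intro x hx hlt
    exact part1 hM hf hpd hsc hdikin hz hmin hfz hx hlt
  · intro x hx hge
    set Q : ℝ := hessBilin f z (x - z) (x - z) with hQdef
    set t : ℝ := Real.sqrt Q with htdef
    have ht0 : 0 < t := lt_of_lt_of_le one_pos hge
    have hQ : 0 < Q := Real.sqrt_pos.mp ht0
    have htQ : t ^ 2 = Q := Real.sq_sqrt hQ.le
    have hfx0 : 0 ≤ f x := hfz ▸ hmin x hx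
    by_contra hlt4
    push_neg at hlt4
    set r : ℝ := (4 * f x + 1) / 2 with hrdef
    have hr0 : 0 < r := by rw [hrdef]; linarith
    have hr1 : r < 1 := by rw [hrdef]; linarith
    have hrfx : f x < r / 4 := by rw [hrdef]; linarith
    set lam : ℝ := r / t with hlamdef
    have hlam0 : 0 < lam := div_pos hr0 ht0
    have hlamr : lam ≤ r := by
      rw [hlamdef, div_le_iff₀ ht0]
      nlinarith
    have hlam1 : lam < 1 := lt_of_le_of_lt hlamr hr1
    set y : Fin n → ℝ := z + lam • (x - z) with hydef
    have hyz : y - z = lam • (x - z) := by rw [hydef]; abel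
    have hhy : hessBilin f z (y - z) (y - z) = r ^ 2 := by
      rw [hyz, hess_smul, ← hQdef, ← htQ, hlamdef]
      field_simp
    have hynorm : Real.sqrt (hessBilin f z (y - z) (y - z)) = r := by
      rw [hhy, Real.sqrt_sq hr0.le]
    have hy : y ∈ M := hdikin z hz y (by rw [hynorm]; exact hr1)
    have hpart1 := part1 hM hf hpd hsc hdikin hz hmin hfz hy (by rw [hynorm]; exact hr1)
    rw [hhy] at hpart1
    -- convexity
    have hycomb : y = (1 - lam) • z + lam • x := by
      rw [hydef]
      module
    have hcvx : f y ≤ (1 - lam) * f z + lam * f x := by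
      rw [hycomb]
      exact hconv.2 hz hx (by linarith) hlam0.le (by ring)
    rw [hfz] at hcvx
    -- combine : r^2/4 ≤ f y ≤ lam * f x = (r/t) * f x
    have h1 : r ^ 2 / 4 ≤ (r / t) * f x := by
      rw [← hlamdef]
      linarith
    have h2 : (r / t) * f x ≤ r * f x := by
      apply mul_le_mul_of_nonneg_right _ hfx0
      rw [div_le_iff₀ ht0]
      nlinarith
    have h3 : r ^ 2 / 4 ≤ r * f x := le_trans h1 h2
    nlinarith
end

section
/- Let f be self-concordant on an open convex set M ⊆ ℝⁿ, let x ∈ M and let q_x be the second-order Taylor expansion of f at x. Then for all y with ‖y - x‖_x < 1, one has |f(y) - q_x(y)| ≤ ‖y - x‖_x³ / (3(1 - ‖y - x‖_x)). -/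
/-- Quadratic scaling of the Hessian form. -/
lemma hessBilin_smul {n : ℕ} (f : (Fin n → ℝ) → ℝ) (z u : Fin n → ℝ) (t : ℝ) :
    hessBilin f z (t • u) (t • u) = t ^ 2 * hessBilin f z u u := by
  unfold hessBilin
  rw [iteratedFDeriv_two_apply, iteratedFDeriv_two_apply]
  simp [Matrix.cons_val_zero, Matrix.cons_val_one, map_smul, smul_eq_mul]
  ring

/-- The key scalar inequality: `-log(1-r) - r - r²/2 ≤ r³/(3(1-r))` for `0 ≤ r < 1`. -/
lemma log_ineq {r : ℝ} (h0 : 0 ≤ r) (h1 : r < 1) :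
    -Real.log (1 - r) - r - r ^ 2 / 2 ≤ r ^ 3 / (3 * (1 - r)) := by
  set φ : ℝ → ℝ := fun s => s ^ 3 / (3 * (1 - s)) + Real.log (1 - s) + s + s ^ 2 / 2 with hφ
  have hder : ∀ s ∈ Set.Icc (0:ℝ) r, HasDerivAt φ
      (((3 * s ^ 2) * (3 * (1 - s)) - s ^ 3 * (-3)) / (3 * (1 - s)) ^ 2
        + (-1) / (1 - s) + 1 + s) s := by
    intro s hs
    have hs1 : 1 - s > 0 := by
      have := hs.2; linarith
    have h1' : HasDerivAt (fun s : ℝ => s ^ 3 / (3 * (1 - s)))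
        (((3 * s ^ 2) * (3 * (1 - s)) - s ^ 3 * (-3)) / (3 * (1 - s)) ^ 2) s := by
      have hnum : HasDerivAt (fun s : ℝ => s ^ 3) (3 * s ^ 2) s := by
        simpa using hasDerivAt_pow 3 s
      have hden : HasDerivAt (fun s : ℝ => 3 * (1 - s)) (-3) s := by
        have : HasDerivAt (fun s : ℝ => 1 - s) (-1) s := by
          simpa using (hasDerivAt_id s).const_sub 1
        simpa using this.const_mul 3
      exact hnum.div hden (by positivity)
    have h2' : HasDerivAt (fun s : ℝ => Real.log (1 - s)) ((-1) / (1 - s)) s := by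
      have : HasDerivAt (fun s : ℝ => 1 - s) (-1) s := by
        simpa using (hasDerivAt_id s).const_sub 1
      exact this.log (ne_of_gt hs1)
    have h4' : HasDerivAt (fun s : ℝ => s ^ 2 / 2) s s := by
      simpa using ((hasDerivAt_pow 2 s).div_const 2)
    exact ((h1'.add h2').add (hasDerivAt_id s)).add h4'
  have hmono : MonotoneOn φ (Set.Icc (0:ℝ) r) := by
    apply monotoneOn_of_deriv_nonneg (convex_Icc 0 r)
    · exact fun s hs => (hder s hs).continuousAt.continuousWithinAt
    · intro s hs
      rw [interior_Icc] at hs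
      exact (hder s (Set.mem_Icc_of_Ioo hs)).differentiableAt.differentiableWithinAt
    · intro s hs
      rw [interior_Icc] at hs
      rw [(hder s (Set.mem_Icc_of_Ioo hs)).deriv]
      have hs0 : 0 < s := hs.1
      have hs1 : 1 - s > 0 := by have := hs.2; linarith
      have key : ((3 * s ^ 2) * (3 * (1 - s)) - s ^ 3 * (-3)) / (3 * (1 - s)) ^ 2
          + (-1) / (1 - s) + 1 + s = s ^ 3 / (3 * (1 - s) ^ 2) := by
        field_simp
        ring
      rw [key]
      positivity
  rcases eq_or_lt_of_le h0 with h | h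
  · simp [← h]
  · have := hmono (Set.left_mem_Icc.mpr h0) (Set.right_mem_Icc.mpr h0) h0
    have hφ0 : φ 0 = 0 := by simp [hφ]
    rw [hφ0] at this
    simp only [hφ] at this
    linarith

set_option maxHeartbeats 2000000 in
/-- For `f` self-concordant on an open convex `M ⊆ ℝⁿ`, `x ∈ M`, and
`q_x` the second-order Taylor expansion of `f` at `x`, if `‖y-x‖_x < 1` then
`|f(y) - q_x(y)| ≤ ‖y-x‖_x³ / (3(1 - ‖y-x‖_x))`. -/
theorem stmt_9 (n : ℕ) (M : Set (Fin n → ℝ)) (hM : IsOpen M) (hMconv : Convex ℝ M)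
    (f : (Fin n → ℝ) → ℝ)
    (hf : ∀ x ∈ M, ContDiffAt ℝ 3 f x)
    (hconv : ConvexOn ℝ M f)
    (hpd : ∀ x ∈ M, ∀ u : Fin n → ℝ, u ≠ 0 → 0 < hessBilin f x u u)
    (hsc : ∀ x ∈ M, ∀ u : Fin n → ℝ,
      |iteratedFDeriv ℝ 3 f x (fun _ => u)| ≤ 2 * hessBilin f x u u ^ ((3 : ℝ) / 2))
    (hdikin : ∀ x ∈ M, ∀ y : Fin n → ℝ,
      Real.sqrt (hessBilin f x (y - x) (y - x)) < 1 → y ∈ M) :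
    ∀ x ∈ M, ∀ y : Fin n → ℝ,
      Real.sqrt (hessBilin f x (y - x) (y - x)) < 1 →
      |f y - (f x + fderiv ℝ f x (y - x) + (1 / 2) * hessBilin f x (y - x) (y - x))|
        ≤ Real.sqrt (hessBilin f x (y - x) (y - x)) ^ 3
            / (3 * (1 - Real.sqrt (hessBilin f x (y - x) (y - x)))) := by
  intro x hx y hy
  set v : Fin n → ℝ := y - x with hv
  set r : ℝ := Real.sqrt (hessBilin f x v v) with hrdef
  by_cases hne : v = 0
  · have h0 : hessBilin f x v v = 0 := by
      rw [hne]
      exact (iteratedFDeriv ℝ 2 f x).map_coord_zero 0 rfl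
    have hr0 : r = 0 := by rw [hrdef, h0, Real.sqrt_zero]
    have hyx : y = x := by
      have hvx : y - x = 0 := by rw [← hv]; exact hne
      exact sub_eq_zero.mp hvx
    rw [hr0, h0, hne, hyx]
    simp
  -- main case
  have hψ0pos : 0 < hessBilin f x v v := hpd x hx v hne
  have hrpos : 0 < r := Real.sqrt_pos.mpr hψ0pos
  have hr1 : r < 1 := hy
  have hr2 : r ^ 2 = hessBilin f x v v := Real.sq_sqrt hψ0pos.le
  set c : ℝ → (Fin n → ℝ) := fun t => x + t • v with hcdef
  have hc0 : c 0 = x := by simp [hcdef]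
  have hc1 : c 1 = y := by simp [hcdef, hv]
  set ψ : ℝ → ℝ := fun t => hessBilin f (c t) v v with hψdef
  set T : ℝ → ℝ := fun t => iteratedFDeriv ℝ 3 f (c t) (fun _ => v) with hTdef
  set g1 : ℝ → ℝ := fun t => fderiv ℝ f (c t) v with hg1def
  have hmem : ∀ t ∈ Set.Icc (0:ℝ) 1, c t ∈ M := by
    intro t ht
    apply hdikin x hx
    have hcs : c t - x = t • v := by simp [hcdef]
    rw [hcs, hessBilin_smul, Real.sqrt_mul (sq_nonneg t), Real.sqrt_sq ht.1, ← hrdef]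
    nlinarith [ht.1, ht.2, hrpos]
  have hcd : ∀ t : ℝ, HasDerivAt c v t := by
    intro t
    have := ((hasDerivAt_id t).smul_const v).const_add x
    rw [one_smul] at this
    exact this
  have hψpos : ∀ t ∈ Set.Icc (0:ℝ) 1, 0 < ψ t := fun t ht => hpd _ (hmem t ht) v hne
  have hψ0 : ψ 0 = hessBilin f x v v := by rw [hψdef]; simp only [hc0]
  have hgd : ∀ t ∈ Set.Icc (0:ℝ) 1, HasDerivAt (fun t => f (c t)) (g1 t) t := by
    intro t ht
    have hdf : DifferentiableAt ℝ f (c t) := (hf _ (hmem t ht)).differentiableAt (by norm_num)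
    exact hdf.hasFDerivAt.comp_hasDerivAt t (hcd t)
  have hg1d : ∀ t ∈ Set.Icc (0:ℝ) 1, HasDerivAt g1 (ψ t) t := by
    intro t ht
    have hfz := hf _ (hmem t ht)
    have hdf1 : DifferentiableAt ℝ (fderiv ℝ f) (c t) :=
      (hfz.fderiv_right (m := 2) (by norm_num)).differentiableAt (by norm_num)
    have step := hdf1.hasFDerivAt.comp_hasDerivAt t (hcd t)
    have main := (ContinuousLinearMap.apply ℝ ℝ v).hasFDerivAt.comp_hasDerivAt t step
    have heq : ψ t = fderiv ℝ (fderiv ℝ f) (c t) v v := by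
      rw [hψdef]
      show hessBilin f (c t) v v = _
      unfold hessBilin
      rw [iteratedFDeriv_two_apply]
      rfl
    rw [heq]
    exact main
  have hψd : ∀ t ∈ Set.Icc (0:ℝ) 1, HasDerivAt ψ (T t) t := by
    intro t ht
    have hfz := hf _ (hmem t ht)
    have hdf2 : DifferentiableAt ℝ (iteratedFDeriv ℝ 2 f) (c t) :=
      (hfz.iteratedFDeriv_right (m := 1) (by norm_num)).differentiableAt (by norm_num)
    have step := hdf2.hasFDerivAt.comp_hasDerivAt t (hcd t)
    have main := (ContinuousMultilinearMap.apply ℝ (fun _ : Fin 2 => (Fin n → ℝ)) ℝ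
      ![v, v]).hasFDerivAt.comp_hasDerivAt t step
    have heq : T t = fderiv ℝ (iteratedFDeriv ℝ 2 f) (c t) v ![v, v] := by
      rw [hTdef]
      show iteratedFDeriv ℝ 3 f (c t) (fun _ => v) = _
      have htail : ![v, v] = Fin.tail (fun _ : Fin 3 => v) := by
        funext i; fin_cases i <;> rfl
      rw [htail]
      exact iteratedFDeriv_succ_apply_left (fun _ : Fin 3 => v)
    rw [heq]
    exact main
  -- the comparison function u = (sqrt ψ)⁻¹ and the upper bound on ψ
  set u : ℝ → ℝ := fun t => (Real.sqrt (ψ t))⁻¹ with hudef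
  set u' : ℝ → ℝ := fun t => -(1 / (2 * Real.sqrt (ψ t)) * T t) / Real.sqrt (ψ t) ^ 2 with hu'def
  have hud : ∀ t ∈ Set.Icc (0:ℝ) 1, HasDerivAt u (u' t) t := by
    intro t ht
    have hpos := hψpos t ht
    have hsq : HasDerivAt (fun t => Real.sqrt (ψ t)) (1 / (2 * Real.sqrt (ψ t)) * T t) t :=
      (Real.hasDerivAt_sqrt (ne_of_gt hpos)).comp t (hψd t ht)
    exact hsq.inv (ne_of_gt (Real.sqrt_pos.mpr hpos))
  have hs3 : ∀ t ∈ Set.Icc (0:ℝ) 1, ψ t ^ ((3:ℝ)/2) = Real.sqrt (ψ t) ^ 3 := by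
    intro t ht
    have hpos := hψpos t ht
    rw [Real.sqrt_eq_rpow, ← Real.rpow_natCast (ψ t ^ ((1:ℝ)/2)) 3, ← Real.rpow_mul hpos.le]
    norm_num
  have hub : ∀ t ∈ Set.Icc (0:ℝ) 1, ‖u' t‖ ≤ 1 := by
    intro t ht
    have hpos := hψpos t ht
    have hsp : 0 < Real.sqrt (ψ t) := Real.sqrt_pos.mpr hpos
    have hT : |T t| ≤ 2 * ψ t ^ ((3:ℝ)/2) := hsc _ (hmem t ht) v
    rw [hs3 t ht] at hT
    show ‖-(1 / (2 * Real.sqrt (ψ t)) * T t) / Real.sqrt (ψ t) ^ 2‖ ≤ 1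
    have : ‖-(1 / (2 * Real.sqrt (ψ t)) * T t) / Real.sqrt (ψ t) ^ 2‖
        = |T t| / (2 * Real.sqrt (ψ t) ^ 3) := by
      rw [Real.norm_eq_abs, abs_div, abs_neg, abs_mul, abs_of_pos (by positivity :
        (0:ℝ) < 1 / (2 * Real.sqrt (ψ t))), abs_of_pos (by positivity : (0:ℝ) < Real.sqrt (ψ t) ^ 2)]
      field_simp
    rw [this, div_le_one (by positivity)]
    linarith
  have hmvt : ∀ t ∈ Set.Icc (0:ℝ) 1, ‖u t - u 0‖ ≤ 1 * ‖t - 0‖ := by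
    intro t ht
    exact Convex.norm_image_sub_le_of_norm_hasDerivWithin_le
      (fun s hs => (hud s hs).hasDerivWithinAt) hub (convex_Icc 0 1)
      (Set.left_mem_Icc.mpr zero_le_one) ht
  have hinv : (1:ℝ) < 1 / r := by
    rw [lt_div_iff₀ hrpos]; linarith
  have husqrt : ∀ t ∈ Set.Icc (0:ℝ) 1, Real.sqrt (ψ t) ≤ r / (1 - t * r) := by
    intro t ht
    have hpos := hψpos t ht
    have hsp : 0 < Real.sqrt (ψ t) := Real.sqrt_pos.mpr hpos
    have hu0 : u 0 = 1 / r := by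
      rw [hudef]; simp only [hψ0, ← hrdef]; rw [one_div]
    have hbound := hmvt t ht
    rw [Real.norm_eq_abs, Real.norm_eq_abs, one_mul, sub_zero, abs_of_nonneg ht.1] at hbound
    have hut : 1 / r - t ≤ u t := by
      have := abs_le.mp hbound
      rw [hu0] at this
      linarith [this.1]
    have hposden : 0 < 1 / r - t := by linarith [ht.2]
    have h1tr : 0 < 1 - t * r := by
      have hh : (1 / r - t) * r = 1 - t * r := by field_simp
      nlinarith
    have h5 : Real.sqrt (ψ t) = (u t)⁻¹ := by
      show _ = ((Real.sqrt (ψ t))⁻¹)⁻¹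
      rw [inv_inv]
    have h6 : (u t)⁻¹ ≤ (1 / r - t)⁻¹ := inv_anti₀ hposden hut
    have h7 : (1 / r - t)⁻¹ = r / (1 - t * r) := by
      have hh : 1 / r - t = (1 - t * r) / r := by field_simp
      rw [hh, inv_div]
    rw [h5]
    rw [h7] at h6
    exact h6
  have hψ32 : ∀ t ∈ Set.Icc (0:ℝ) 1, ψ t ^ ((3:ℝ)/2) ≤ r ^ 3 / (1 - t * r) ^ 3 := by
    intro t ht
    rw [hs3 t ht, ← div_pow]
    exact pow_le_pow_left₀ (Real.sqrt_nonneg _) (husqrt t ht) 3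
  have h1trpos : ∀ t ∈ Set.Icc (0:ℝ) 1, 0 < 1 - t * r := by
    intro t ht
    nlinarith [ht.1, ht.2, hrpos, hr1]
  -- the Taylor error function F and its derivative
  set F : ℝ → ℝ := fun t => f (c 1) - f (c t) - (1 - t) * g1 t - (1 - t) ^ 2 / 2 * ψ t with hFdef
  have hFd : ∀ t ∈ Set.Icc (0:ℝ) 1, HasDerivAt F (-((1 - t) ^ 2 / 2 * T t)) t := by
    intro t ht
    have hlin : HasDerivAt (fun t : ℝ => 1 - t) (-1) t := by
      simpa using (hasDerivAt_id t).const_sub 1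
    have d1 : HasDerivAt (fun t => f (c 1) - f (c t)) (-(g1 t)) t := (hgd t ht).const_sub (f (c 1))
    have d2 := hlin.mul (hg1d t ht)
    have dsq := (hlin.pow 2).div_const 2
    have d3 := dsq.mul (hψd t ht)
    have total := (d1.sub d2).sub d3
    refine (show HasDerivAt F _ t from total).congr_deriv ?_
    push_cast
    simp only [Pi.pow_apply]
    ring
  -- the majorant Mm and its derivative
  set Mm : ℝ → ℝ := fun t => -Real.log (1 - t * r) - 2 * (1 - r) / (1 - t * r)
      + (1 - r) ^ 2 / (2 * (1 - t * r) ^ 2) with hMdef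
  have hMd : ∀ t ∈ Set.Icc (0:ℝ) 1, HasDerivAt Mm (r ^ 3 * (1 - t) ^ 2 / (1 - t * r) ^ 3) t := by
    intro t ht
    have htr := h1trpos t ht
    have hlin2 : HasDerivAt (fun t : ℝ => 1 - t * r) (-r) t := by
      simpa using ((hasDerivAt_id t).mul_const r).const_sub 1
    have A := (hlin2.log (ne_of_gt htr)).neg
    have B := (hasDerivAt_const t (2 * (1 - r))).div hlin2 (ne_of_gt htr)
    have Cden := (hlin2.pow 2).const_mul 2
    have C := (hasDerivAt_const t ((1 - r) ^ 2)).div Cden (by simp only [Pi.pow_apply]; positivity)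
    have total := (A.sub B).add C
    refine (show HasDerivAt Mm _ t from total).congr_deriv ?_
    push_cast
    simp only [Pi.pow_apply]
    field_simp
    ring
  have hFbound : ∀ t ∈ Set.Icc (0:ℝ) 1,
      |(-((1 - t) ^ 2 / 2 * T t))| ≤ r ^ 3 * (1 - t) ^ 2 / (1 - t * r) ^ 3 := by
    intro t ht
    have hT : |T t| ≤ 2 * ψ t ^ ((3:ℝ)/2) := hsc _ (hmem t ht) v
    have h32 := hψ32 t ht
    have htr := h1trpos t ht
    have h1 : |(-((1 - t) ^ 2 / 2 * T t))| = (1 - t) ^ 2 / 2 * |T t| := by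
      rw [abs_neg, abs_mul, abs_of_nonneg (by positivity : (0:ℝ) ≤ (1 - t) ^ 2 / 2)]
    rw [h1]
    have h2 : (1 - t) ^ 2 / 2 * |T t| ≤ (1 - t) ^ 2 / 2 * (2 * ψ t ^ ((3:ℝ)/2)) := by
      apply mul_le_mul_of_nonneg_left hT (by positivity)
    have h3 : (1 - t) ^ 2 / 2 * (2 * ψ t ^ ((3:ℝ)/2)) = (1 - t) ^ 2 * ψ t ^ ((3:ℝ)/2) := by ring
    have h4 : (1 - t) ^ 2 * ψ t ^ ((3:ℝ)/2) ≤ (1 - t) ^ 2 * (r ^ 3 / (1 - t * r) ^ 3) :=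
      mul_le_mul_of_nonneg_left h32 (by positivity)
    calc (1 - t) ^ 2 / 2 * |T t| ≤ (1 - t) ^ 2 * ψ t ^ ((3:ℝ)/2) := by rw [← h3]; exact h2
      _ ≤ (1 - t) ^ 2 * (r ^ 3 / (1 - t * r) ^ 3) := h4
      _ = r ^ 3 * (1 - t) ^ 2 / (1 - t * r) ^ 3 := by ring
  -- monotone comparison
  have hmono : ∀ (ε : ℝ), ε = 1 ∨ ε = -1 →
      MonotoneOn (fun t => Mm t + ε * F t) (Set.Icc (0:ℝ) 1) := by
    intro ε hε
    apply monotoneOn_of_deriv_nonneg (convex_Icc 0 1)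
    · intro s hs
      exact ((hMd s hs).add ((hFd s hs).const_mul ε)).continuousAt.continuousWithinAt
    · intro s hs
      rw [interior_Icc] at hs
      have hs' := Set.mem_Icc_of_Ioo hs
      exact ((hMd s hs').add ((hFd s hs').const_mul ε)).differentiableAt.differentiableWithinAt
    · intro s hs
      rw [interior_Icc] at hs
      have hs' := Set.mem_Icc_of_Ioo hs
      rw [(show HasDerivAt (fun t => Mm t + ε * F t) _ s from
        (hMd s hs').add ((hFd s hs').const_mul ε)).deriv]
      have hb := abs_le.mp (hFbound s hs')
      rcases hε with hε | hε <;> rw [hε] <;> nlinarith [hb.1, hb.2]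
  have hmem0 : (0:ℝ) ∈ Set.Icc (0:ℝ) 1 := Set.left_mem_Icc.mpr zero_le_one
  have hmem1 : (1:ℝ) ∈ Set.Icc (0:ℝ) 1 := Set.right_mem_Icc.mpr zero_le_one
  have hG1 := hmono 1 (Or.inl rfl) hmem0 hmem1 zero_le_one
  have hG2 := hmono (-1) (Or.inr rfl) hmem0 hmem1 zero_le_one
  simp only [one_mul, neg_one_mul] at hG1 hG2
  have hF1 : F 1 = 0 := by
    show f (c 1) - f (c 1) - (1 - 1) * g1 1 - (1 - 1) ^ 2 / 2 * ψ 1 = 0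
    ring
  have hr1' : (1:ℝ) - r ≠ 0 := ne_of_gt (by linarith)
  have hΔ : Mm 1 - Mm 0 = -Real.log (1 - r) - r - r ^ 2 / 2 := by
    show -Real.log (1 - 1 * r) - 2 * (1 - r) / (1 - 1 * r) + (1 - r) ^ 2 / (2 * (1 - 1 * r) ^ 2)
      - (-Real.log (1 - 0 * r) - 2 * (1 - r) / (1 - 0 * r) + (1 - r) ^ 2 / (2 * (1 - 0 * r) ^ 2)) = _
    rw [one_mul, zero_mul, sub_zero, Real.log_one]
    field_simp
    ring
  have habs : |F 0| ≤ Mm 1 - Mm 0 := by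
    rw [hF1] at hG1 hG2
    apply abs_le.mpr
    constructor <;> linarith
  have hF0 : F 0 = f y - (f x + fderiv ℝ f x v + 1 / 2 * hessBilin f x v v) := by
    show f (c 1) - f (c 0) - (1 - 0) * (fderiv ℝ f (c 0)) v
        - (1 - 0) ^ 2 / 2 * hessBilin f (c 0) v v = _
    rw [hc0, hc1]
    ring
  rw [← hF0]
  calc |F 0| ≤ Mm 1 - Mm 0 := habs
    _ = -Real.log (1 - r) - r - r ^ 2 / 2 := hΔ
    _ ≤ r ^ 3 / (3 * (1 - r)) := log_ineq hrpos.le hr1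
end

section
/- Let f be self-concordant on M ⊆ ℝⁿ and x, y ∈ M with r := ‖y - x‖_x < 1. Then the Hessians satisfy (1-r)² ∇²f(x) ⪯ ∇²f(y) ⪯ (1-r)^{-2} ∇²f(x) in the Loewner order. -/
set_option maxHeartbeats 1000000

section SC

noncomputable def triLin {n : ℕ} (f : (Fin n → ℝ) → ℝ) (x a b c : Fin n → ℝ) : ℝ :=
  iteratedFDeriv ℝ 3 f x ![a, b, c]

variable {n : ℕ} {f : (Fin n → ℝ) → ℝ}

lemma upd2_0 (a b x : Fin n → ℝ) : Function.update ![a, b] 0 x = ![x, b] := by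
  funext i; fin_cases i <;> simp [Function.update]
lemma upd2_1 (a b x : Fin n → ℝ) : Function.update ![a, b] 1 x = ![a, x] := by
  funext i; fin_cases i <;> simp [Function.update]
lemma upd3_0 (a b c x : Fin n → ℝ) : Function.update ![a, b, c] 0 x = ![x, b, c] := by
  funext i; fin_cases i <;> simp [Function.update]
lemma upd3_1 (a b c x : Fin n → ℝ) : Function.update ![a, b, c] 1 x = ![a, x, c] := by
  funext i; fin_cases i <;> simp [Function.update]
lemma upd3_2 (a b c x : Fin n → ℝ) : Function.update ![a, b, c] 2 x = ![a, b, x] := by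
  funext i; fin_cases i <;> simp [Function.update]

lemma hess_add_left (x a a' b : Fin n → ℝ) :
    hessBilin f x (a + a') b = hessBilin f x a b + hessBilin f x a' b := by
  have := (iteratedFDeriv ℝ 2 f x).map_update_add ![a, b] 0 a a'
  simpa [hessBilin, upd2_0] using this

lemma hess_smul_left (x : Fin n → ℝ) (t : ℝ) (a b : Fin n → ℝ) :
    hessBilin f x (t • a) b = t * hessBilin f x a b := by
  have := (iteratedFDeriv ℝ 2 f x).map_update_smul ![a, b] 0 t a
  simpa [hessBilin, upd2_0] using this

lemma hess_smul_right (x : Fin n → ℝ) (t : ℝ) (a b : Fin n → ℝ) :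
    hessBilin f x a (t • b) = t * hessBilin f x a b := by
  have := (iteratedFDeriv ℝ 2 f x).map_update_smul ![a, b] 1 t b
  simpa [hessBilin, upd2_1] using this

lemma hess_add_right (x a b b' : Fin n → ℝ) :
    hessBilin f x a (b + b') = hessBilin f x a b + hessBilin f x a b' := by
  have := (iteratedFDeriv ℝ 2 f x).map_update_add ![a, b] 1 b b'
  simpa [hessBilin, upd2_1] using this

lemma tri_add (x : Fin n → ℝ) (i : Fin 3) : True := trivial

lemma tri_smul_1 (x : Fin n → ℝ) (t : ℝ) (a b c : Fin n → ℝ) :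
    triLin f x (t • a) b c = t * triLin f x a b c := by
  have := (iteratedFDeriv ℝ 3 f x).map_update_smul ![a, b, c] 0 t a
  simpa [triLin, upd3_0] using this
lemma tri_smul_2 (x : Fin n → ℝ) (t : ℝ) (a b c : Fin n → ℝ) :
    triLin f x a (t • b) c = t * triLin f x a b c := by
  have := (iteratedFDeriv ℝ 3 f x).map_update_smul ![a, b, c] 1 t b
  simpa [triLin, upd3_1] using this
lemma tri_smul_3 (x : Fin n → ℝ) (t : ℝ) (a b c : Fin n → ℝ) :
    triLin f x a b (t • c) = t * triLin f x a b c := by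
  have := (iteratedFDeriv ℝ 3 f x).map_update_smul ![a, b, c] 2 t c
  simpa [triLin, upd3_2] using this
lemma tri_add_1 (x a a' b c : Fin n → ℝ) :
    triLin f x (a + a') b c = triLin f x a b c + triLin f x a' b c := by
  have := (iteratedFDeriv ℝ 3 f x).map_update_add ![a, b, c] 0 a a'
  simpa [triLin, upd3_0] using this
lemma tri_add_2 (x a b b' c : Fin n → ℝ) :
    triLin f x a (b + b') c = triLin f x a b c + triLin f x a b' c := by
  have := (iteratedFDeriv ℝ 3 f x).map_update_add ![a, b, c] 1 b b'
  simpa [triLin, upd3_1] using this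
lemma tri_add_3 (x a b c c' : Fin n → ℝ) :
    triLin f x a b (c + c') = triLin f x a b c + triLin f x a b c' := by
  have := (iteratedFDeriv ℝ 3 f x).map_update_add ![a, b, c] 2 c c'
  simpa [triLin, upd3_2] using this

lemma tri_diag (x u : Fin n → ℝ) : iteratedFDeriv ℝ 3 f x (fun _ => u) = triLin f x u u u := by
  congr 1; funext i; fin_cases i <;> rfl

lemma hess_symm {x : Fin n → ℝ} (hf : ContDiffAt ℝ 3 f x) (u v : Fin n → ℝ) :
    hessBilin f x u v = hessBilin f x v u := by
  have hs := hf.isSymmSndFDerivAt (by norm_num)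
  simp only [hessBilin, iteratedFDeriv_two_apply]
  simpa using hs u v

lemma tri_symm_12 {x : Fin n → ℝ} (hf : ContDiffAt ℝ 3 f x) (a b c : Fin n → ℝ) :
    triLin f x a b c = triLin f x b a c := by
  have hs : IsSymmSndFDerivAt ℝ (fderiv ℝ f) x :=
    (hf.fderiv_right (m := 2) (by norm_num)).isSymmSndFDerivAt (by norm_num)
  have key : ∀ p q r : Fin n → ℝ, triLin f x p q r
      = fderiv ℝ (fderiv ℝ (fderiv ℝ f)) x p q r := by
    intro p q r
    have h1 : Fin.init ![p,q,r] = ![p,q] := by funext i; fin_cases i <;> rfl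
    rw [triLin, iteratedFDeriv_succ_apply_right, h1]
    have e1 : (![p,q,r] : Fin 3 → (Fin n → ℝ)) (Fin.last 2) = r := rfl
    rw [e1, iteratedFDeriv_two_apply]
    rfl
  rw [key, key]
  have := hs a b
  rw [this]

lemma tri_symm_23 {x : Fin n → ℝ} (hf : ∀ᶠ y in nhds x, ContDiffAt ℝ 3 f y)
    (a b c : Fin n → ℝ) : triLin f x a b c = triLin f x a c b := by
  have hfx : ContDiffAt ℝ 3 f x := hf.self_of_nhds
  have hdiff : DifferentiableAt ℝ (iteratedFDeriv ℝ 2 f) x :=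
    (hfx.iteratedFDeriv_right (m := 1) (by norm_num)).differentiableAt (by norm_num)
  simp only [triLin, iteratedFDeriv_succ_apply_left]
  have ht1 : Fin.tail ![a,b,c] = ![b,c] := by funext i; fin_cases i <;> rfl
  have ht2 : Fin.tail ![a,c,b] = ![c,b] := by funext i; fin_cases i <;> rfl
  have e0 : (![a,b,c] : Fin 3 → (Fin n → ℝ)) 0 = a := rfl
  have e0' : (![a,c,b] : Fin 3 → (Fin n → ℝ)) 0 = a := rfl
  rw [ht1, ht2, e0, e0']
  have key : ∀ m : Fin 2 → (Fin n → ℝ),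
      fderiv ℝ (iteratedFDeriv ℝ 2 f) x a m
        = fderiv ℝ (fun y => iteratedFDeriv ℝ 2 f y m) x a := by
    intro m
    rw [(hdiff.hasFDerivAt.continuousMultilinear_apply_const m).fderiv]
    rfl
  rw [key ![b,c], key ![c,b]]
  have heq : (fun y => iteratedFDeriv ℝ 2 f y ![b,c])
      =ᶠ[nhds x] (fun y => iteratedFDeriv ℝ 2 f y ![c,b]) := by
    filter_upwards [hf] with y hy
    have := hess_symm hy b c
    simpa [hessBilin] using this
  rw [heq.fderiv_eq]

end SC


lemma plane_lemma (A B C D : ℝ)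
    (H : ∀ c s : ℝ, c^2 + s^2 = 1 → |c^3*A + 3*c^2*s*B + 3*c*s^2*C + s^3*D| ≤ 2)
    (p q : ℝ) (hpq : p^2 + q^2 = 1) : |p*A + q*B| ≤ 2 := by
  -- get cube root on the circle
  set z : ℂ := ⟨p, q⟩ with hz
  have hzabs : ‖z‖ = 1 := by
    rw [Complex.norm_def, hz, Complex.normSq_mk, show p*p + q*q = (1:ℝ) by nlinarith]
    exact Real.sqrt_one
  have hzne : z ≠ 0 := by
    intro h; rw [h] at hzabs; simp at hzabs
  set c : ℝ := Real.cos (z.arg / 3) with hc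
  set s : ℝ := Real.sin (z.arg / 3) with hs
  have hcs : c^2 + s^2 = 1 := by
    rw [hc, hs]; rw [add_comm]; exact Real.sin_sq_add_cos_sq _
  have hp : 4*c^3 - 3*c = p := by
    have := Real.cos_three_mul (z.arg / 3)
    rw [show 3 * (z.arg/3) = z.arg by ring] at this
    have h2 := Complex.cos_arg hzne
    rw [hzabs] at h2
    simp [hz] at h2
    rw [h2] at this; linarith [this]
  have hq : 3*s - 4*s^3 = q := by
    have := Real.sin_three_mul (z.arg / 3)
    rw [show 3 * (z.arg/3) = z.arg by ring] at this
    have h2 := Complex.sin_arg z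
    rw [hzabs] at h2
    simp [hz] at h2
    rw [h2] at this; linarith [this]
  set t : ℝ := Real.sqrt 3 with ht
  have h3 : t^2 = 3 := Real.sq_sqrt (by norm_num)
  -- three points
  set c1 : ℝ := (-c - t*s)/2 with hc1
  set s1 : ℝ := (t*c - s)/2 with hs1
  set c2 : ℝ := (-c + t*s)/2 with hc2
  set s2 : ℝ := (-(t*c) - s)/2 with hs2
  have hcirc1 : c1^2 + s1^2 = 1 := by
    rw [hc1, hs1]; linear_combination ((1/4 : ℝ) + (1/4 : ℝ)*t^2) * hcs + (1/4 : ℝ) * h3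
  have hcirc2 : c2^2 + s2^2 = 1 := by
    rw [hc2, hs2]; linear_combination ((1/4 : ℝ) + (1/4 : ℝ)*t^2) * hcs + (1/4 : ℝ) * h3
  set w0 : ℝ := (4/9)*(c^2 - s^2 + 1/2)^2 with hw0
  set w1 : ℝ := (4/9)*(c1^2 - s1^2 + 1/2)^2 with hw1
  set w2 : ℝ := (4/9)*(c2^2 - s2^2 + 1/2)^2 with hw2
  have hw0n : 0 ≤ w0 := by positivity
  have hw1n : 0 ≤ w1 := by positivity
  have hw2n : 0 ≤ w2 := by positivity
  have hwsum : w0 + w1 + w2 = 1 := by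
    rw [hw0, hw1, hw2, hc1, hs1, hc2, hs2]
    linear_combination ((-1/6 : ℝ) + (1/9 : ℝ)*t^2 + (1/18 : ℝ)*t^4 + (1/2 : ℝ)*s^2 + (-1/9 : ℝ)*s^2*t^2 + (1/18 : ℝ)*s^2*t^4 + (-3/2 : ℝ)*c^2 + (11/9 : ℝ)*c^2*t^2 + (-1/6 : ℝ)*c^2*t^4) * hcs + ((5/18 : ℝ) + (1/18 : ℝ)*t^2 + (2/9 : ℝ)*c^2 + (-2/9 : ℝ)*c^2*t^2 + (-2/3 : ℝ)*c^4 + (2/9 : ℝ)*c^4*t^2) * h3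
  set xi0 : ℝ := c^3*A + 3*c^2*s*B + 3*c*s^2*C + s^3*D with hxi0
  set xi1 : ℝ := c1^3*A + 3*c1^2*s1*B + 3*c1*s1^2*C + s1^3*D with hxi1
  set xi2 : ℝ := c2^3*A + 3*c2^2*s2*B + 3*c2*s2^2*C + s2^3*D with hxi2
  have hmain : w0*xi0 + w1*xi1 + w2*xi2 = p*A + q*B := by
    rw [hxi0, hxi1, hxi2, hw0, hw1, hw2, hc1, hs1, hc2, hs2, ← hp, ← hq]
    linear_combination ((5/48 : ℝ)*s*D + (4 : ℝ)*s*B + (-1/72 : ℝ)*s*t^2*D + (-1/48 : ℝ)*s*t^2*B + (-1/144 : ℝ)*s*t^4*D + (-1/24 : ℝ)*s*t^4*B + (-1/48 : ℝ)*s*t^6*B + (1/48 : ℝ)*s^3*D + (-1/72 : ℝ)*s^3*t^2*D + (1/16 : ℝ)*s^3*t^2*B + (-1/144 : ℝ)*s^3*t^4*D + (-1/24 : ℝ)*s^3*t^4*B + (-1/48 : ℝ)*s^3*t^6*B + (7/16 : ℝ)*s^5*D + (1/72 : ℝ)*s^5*t^2*D + (-1/48 : ℝ)*s^5*t^2*B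 + (-1/144 : ℝ)*s^5*t^4*D + (1/24 : ℝ)*s^5*t^4*B + (-1/48 : ℝ)*s^5*t^6*B + (5/16 : ℝ)*c*C + (-1/6 : ℝ)*c*t^2*C + (-1/48 : ℝ)*c*t^2*A + (-5/48 : ℝ)*c*t^4*C + (-7/72 : ℝ)*c*t^4*A + (1/24 : ℝ)*c*t^6*C + (-11/144 : ℝ)*c*t^6*A + (1/16 : ℝ)*c*s^2*C + (-1/3 : ℝ)*c*s^2*t^2*C + (1/16 : ℝ)*c*s^2*t^2*A + (-5/48 : ℝ)*c*s^2*t^4*C + (-7/72 : ℝ)*c*s^2*t^4*A + (1/24 : ℝ)*c*s^2*t^6*C + (-11/144 : ℝ)*c*s^2*t^6*A + (21/16 : ℝ)*c*s^4*C + (1/4 : ℝ)*c*s^4*t^2*C + (-1/48 : ℝ)*c*s^4*t^2*A + (-13/48 : ℝ)*c*s^4*t^4*C + (7/72 : ℝ)*c*s^4*t^4*A + (1/24 : ℝ)*c*s^4*t^6*C + (-11/144 : ℝ)*c*s^4*t^6*A + (-11/12 : ℝ)*c^2*s*D + (1/16 : ℝ)*c^2*s*B + (17/144 : ℝ)*c^2*s*t^2*D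 + (-7/12 : ℝ)*c^2*s*t^2*B + (11/72 : ℝ)*c^2*s*t^4*D + (-7/16 : ℝ)*c^2*s*t^4*B + (-1/48 : ℝ)*c^2*s*t^6*D + (7/24 : ℝ)*c^2*s*t^6*B + (-21/16 : ℝ)*c^2*s^3*D + (21/16 : ℝ)*c^2*s^3*B + (-49/144 : ℝ)*c^2*s^3*t^2*D + (23/48 : ℝ)*c^2*s^3*t^2*B + (11/48 : ℝ)*c^2*s^3*t^4*D + (-17/16 : ℝ)*c^2*s^3*t^4*B + (-1/48 : ℝ)*c^2*s^3*t^6*D + (13/48 : ℝ)*c^2*s^3*t^6*B + (-11/4 : ℝ)*c^3*C + (1/48 : ℝ)*c^3*A + (1/16 : ℝ)*c^3*t^2*C + (-19/72 : ℝ)*c^3*t^2*A + (11/8 : ℝ)*c^3*t^4*C + (-9/16 : ℝ)*c^3*t^4*A + (-17/48 : ℝ)*c^3*t^6*C + (1/4 : ℝ)*c^3*t^6*A + (-63/16 : ℝ)*c^3*s^2*C + (7/16 : ℝ)*c^3*s^2*A + (-61/48 : ℝ)*c^3*s^2*t^2*C + (35/144 : ℝ)*c^3*s^2*t^2*A + (89/48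 : ℝ)*c^3*s^2*t^4*C + (-107/144 : ℝ)*c^3*s^2*t^4*A + (-5/16 : ℝ)*c^3*s^2*t^6*C + (25/144 : ℝ)*c^3*s^2*t^6*A + (7/4 : ℝ)*c^4*s*D + (-63/16 : ℝ)*c^4*s*B + (9/16 : ℝ)*c^4*s*t^2*D + (-3/2 : ℝ)*c^4*s*t^2*B + (-7/8 : ℝ)*c^4*s*t^4*D + (127/48 : ℝ)*c^4*s*t^4*B + (17/144 : ℝ)*c^4*s*t^6*D + (-13/24 : ℝ)*c^4*s*t^6*B + (21/4 : ℝ)*c^5*C + (-21/16 : ℝ)*c^5*A + (83/48 : ℝ)*c^5*t^2*C + (-41/72 : ℝ)*c^5*t^2*A + (-23/8 : ℝ)*c^5*t^4*C + (139/144 : ℝ)*c^5*t^4*A + (9/16 : ℝ)*c^5*t^6*C + (-7/36 : ℝ)*c^5*t^6*A) * hcs + ((-5/144 : ℝ)*s*D + (-1/3 : ℝ)*s*B + (-1/144 : ℝ)*s*t^2*D + (-5/48 : ℝ)*s*t^2*B + (-1/48 : ℝ)*s*t^4*B + (-5/48 : ℝ)*c*C + (-1 : ℝ)*c*A + (1/48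 : ℝ)*c*t^2*C + (-47/144 : ℝ)*c*t^2*A + (1/24 : ℝ)*c*t^4*C + (-11/144 : ℝ)*c*t^4*A + (49/144 : ℝ)*c^2*s*D + (59/48 : ℝ)*c^2*s*B + (7/72 : ℝ)*c^2*s*t^2*D + (13/24 : ℝ)*c^2*s*t^2*B + (-1/48 : ℝ)*c^2*s*t^4*D + (5/16 : ℝ)*c^2*s*t^4*B + (49/48 : ℝ)*c^3*C + (187/144 : ℝ)*c^3*A + (7/24 : ℝ)*c^3*t^2*C + (37/72 : ℝ)*c^3*t^2*A + (-19/48 : ℝ)*c^3*t^4*C + (47/144 : ℝ)*c^3*t^4*A + (-8/9 : ℝ)*c^4*s*D + (11/12 : ℝ)*c^4*s*B + (-5/12 : ℝ)*c^4*s*t^2*D + (5/12 : ℝ)*c^4*s*t^2*B + (5/36 : ℝ)*c^4*s*t^4*D + (-5/6 : ℝ)*c^4*s*t^4*B + (-8/3 : ℝ)*c^5*C + (11/36 : ℝ)*c^5*A + (-17/12 : ℝ)*c^5*t^2*C + (7/36 : ℝ)*c^5*t^2*A + (11/12 : ℝ)*c^5*t^4*C + (-4/9 : ℝ)*c^5*t^4*A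 + (7/12 : ℝ)*c^6*s*D + (-7/4 : ℝ)*c^6*s*B + (7/18 : ℝ)*c^6*s*t^2*D + (-7/6 : ℝ)*c^6*s*t^2*B + (-7/36 : ℝ)*c^6*s*t^4*D + (7/12 : ℝ)*c^6*s*t^4*B + (7/4 : ℝ)*c^7*C + (-7/12 : ℝ)*c^7*A + (7/6 : ℝ)*c^7*t^2*C + (-7/18 : ℝ)*c^7*t^2*A + (-7/12 : ℝ)*c^7*t^4*C + (7/36 : ℝ)*c^7*t^4*A) * h3
  have b0 : |xi0| ≤ 2 := H c s hcs
  have b1 : |xi1| ≤ 2 := H c1 s1 hcirc1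
  have b2 : |xi2| ≤ 2 := H c2 s2 hcirc2
  calc |p*A + q*B| = |w0*xi0 + w1*xi1 + w2*xi2| := by rw [hmain]
    _ ≤ |w0*xi0| + |w1*xi1| + |w2*xi2| := abs_add_three _ _ _
    _ = w0*|xi0| + w1*|xi1| + w2*|xi2| := by
        rw [abs_mul w0 xi0, abs_mul w1 xi1, abs_mul w2 xi2, abs_of_nonneg hw0n, abs_of_nonneg hw1n, abs_of_nonneg hw2n]
    _ ≤ w0*2 + w1*2 + w2*2 := by
        gcongr <;> assumption
    _ = 2 := by linarith [hwsum]


section Mixed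
variable {n : ℕ} {f : (Fin n → ℝ) → ℝ}

lemma hess_expand {x : Fin n → ℝ} (hf : ContDiffAt ℝ 3 f x) (c s : ℝ) (a b : Fin n → ℝ) :
    hessBilin f x (c • a + s • b) (c • a + s • b)
      = c^2 * hessBilin f x a a + 2*c*s * hessBilin f x a b + s^2 * hessBilin f x b b := by
  rw [hess_add_left, hess_add_right, hess_add_right]
  simp only [hess_smul_left, hess_smul_right]
  rw [hess_symm hf b a]
  ring

lemma tri_expand {x : Fin n → ℝ} (hf : ∀ᶠ y in nhds x, ContDiffAt ℝ 3 f y) (c s : ℝ)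
    (a b : Fin n → ℝ) :
    triLin f x (c • a + s • b) (c • a + s • b) (c • a + s • b)
      = c^3 * triLin f x a a a + 3*c^2*s * triLin f x a a b
        + 3*c*s^2 * triLin f x a b b + s^3 * triLin f x b b b := by
  have hfx := hf.self_of_nhds
  have e1 : triLin f x a b a = triLin f x a a b := tri_symm_23 hf a b a
  have e2 : triLin f x b a a = triLin f x a a b := by
    rw [tri_symm_12 hfx b a a, e1]
  have e3 : triLin f x b a b = triLin f x a b b := tri_symm_12 hfx b a b
  have e4 : triLin f x b b a = triLin f x a b b := by
    rw [tri_symm_23 hf b b a, e3]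
  rw [tri_add_1, tri_add_2, tri_add_2, tri_add_3, tri_add_3, tri_add_3, tri_add_3]
  simp only [tri_smul_1, tri_smul_2, tri_smul_3]
  rw [e1, e2, e3, e4]
  ring

lemma tri_zero_mid (x a c : Fin n → ℝ) : triLin f x a 0 c = 0 := by
  have h0 : (0 : Fin n → ℝ) = (0:ℝ) • (0 : Fin n → ℝ) := by simp
  rw [h0, tri_smul_2]; ring

lemma tri_zero_left (x b c : Fin n → ℝ) : triLin f x 0 b c = 0 := by
  have h0 : (0 : Fin n → ℝ) = (0:ℝ) • (0 : Fin n → ℝ) := by simp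
  rw [h0, tri_smul_1]; ring

lemma hess_zero_left (x a : Fin n → ℝ) : hessBilin f x 0 a = 0 := by
  have h0 : (0 : Fin n → ℝ) = (0:ℝ) • (0 : Fin n → ℝ) := by simp
  rw [h0, hess_smul_left]; ring

lemma hess_nonneg {x : Fin n → ℝ} (hpdx : ∀ u : Fin n → ℝ, u ≠ 0 → 0 < hessBilin f x u u)
    (u : Fin n → ℝ) : 0 ≤ hessBilin f x u u := by
  rcases eq_or_ne u 0 with rfl | hu
  · rw [hess_zero_left]
  · exact (hpdx u hu).le

/-- The key pointwise mixed bound `|T[h,u,u]| ≤ 2 √(P h h) * P u u`. -/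
lemma mixed_bound {x : Fin n → ℝ} (hfe : ∀ᶠ y in nhds x, ContDiffAt ℝ 3 f y)
    (hpdx : ∀ u : Fin n → ℝ, u ≠ 0 → 0 < hessBilin f x u u)
    (hscx : ∀ w : Fin n → ℝ, |triLin f x w w w| ≤ 2 * hessBilin f x w w ^ ((3:ℝ)/2))
    (h u : Fin n → ℝ) :
    |triLin f x h u u| ≤ 2 * Real.sqrt (hessBilin f x h h) * hessBilin f x u u := by
  have hfx := hfe.self_of_nhds
  rcases eq_or_ne u 0 with rfl | hu
  · rw [tri_zero_mid x h 0, hess_zero_left x 0, abs_zero, mul_zero]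
  rcases eq_or_ne h 0 with rfl | hh
  · rw [tri_zero_left, hess_zero_left, abs_zero, Real.sqrt_zero, mul_zero, zero_mul]
  obtain ⟨nu, hnu⟩ : ∃ r : ℝ, r = Real.sqrt (hessBilin f x u u) := ⟨_, rfl⟩
  have hnupos : 0 < nu := hnu ▸ Real.sqrt_pos.2 (hpdx u hu)
  have huu : hessBilin f x u u = nu^2 := by
    rw [hnu, Real.sq_sqrt (hess_nonneg hpdx u)]
  obtain ⟨uh, huh⟩ : ∃ v : Fin n → ℝ, v = nu⁻¹ • u := ⟨_, rfl⟩
  have huval : u = nu • uh := by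
    rw [huh, smul_smul, mul_inv_cancel₀ hnupos.ne', one_smul]
  have hPuh : hessBilin f x uh uh = 1 := by
    rw [huh, hess_smul_left, hess_smul_right, huu]
    field_simp
  obtain ⟨β, hβ⟩ : ∃ r : ℝ, r = hessBilin f x h uh := ⟨_, rfl⟩
  obtain ⟨w, hw⟩ : ∃ v : Fin n → ℝ, v = h - β • uh := ⟨_, rfl⟩
  have hhw : h = β • uh + w := by rw [hw]; module
  have hworth : hessBilin f x w uh = 0 := by
    rw [hw, show h - β • uh = h + (-β) • uh by module, hess_add_left, hess_smul_left, ← hβ, hPuh]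
    ring
  have hPhh : hessBilin f x h h = β^2 + hessBilin f x w w := by
    conv_lhs => rw [hhw]
    rw [hess_add_left, hess_add_right, hess_add_right]
    simp only [hess_smul_left, hess_smul_right]
    rw [hPuh, hess_symm hfx uh w, hworth]
    ring
  rcases eq_or_ne w 0 with hw0 | hwne
  · -- h parallel to u
    have hhval : h = β • uh := by
      rw [hhw, hw0, add_zero]
    have hT : triLin f x h u u = β * nu^2 * triLin f x uh uh uh := by
      conv_lhs => rw [hhval, huval]
      rw [tri_smul_1, tri_smul_2, tri_smul_3]
      ring
    have hTd : |triLin f x uh uh uh| ≤ 2 := by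
      have := hscx uh; rw [hPuh] at this; simpa using this
    have hPhh' : hessBilin f x h h = β^2 := by
      rw [hPhh, hw0, hess_zero_left]; ring
    rw [hT, hPhh', huu, Real.sqrt_sq_eq_abs, abs_mul]
    have e : |β * nu^2| = |β| * nu^2 := by
      rw [abs_mul, abs_of_nonneg (sq_nonneg nu)]
    rw [e]
    calc |β| * nu ^ 2 * |triLin f x uh uh uh| ≤ |β| * nu^2 * 2 := by
          apply mul_le_mul_of_nonneg_left hTd; positivity
      _ = 2 * |β| * nu^2 := by ring
  · -- genuine 2-dimensional case
    have hwpos : 0 < hessBilin f x w w := hpdx w hwne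
    obtain ⟨η, hη⟩ : ∃ r : ℝ, r = Real.sqrt (hessBilin f x w w) := ⟨_, rfl⟩
    have hηpos : 0 < η := hη ▸ Real.sqrt_pos.2 hwpos
    have hww : hessBilin f x w w = η^2 := by rw [hη, Real.sq_sqrt hwpos.le]
    obtain ⟨vh, hvh⟩ : ∃ v : Fin n → ℝ, v = η⁻¹ • w := ⟨_, rfl⟩
    have hwval : w = η • vh := by
      rw [hvh, smul_smul, mul_inv_cancel₀ hηpos.ne', one_smul]
    have hPvh : hessBilin f x vh vh = 1 := by
      rw [hvh, hess_smul_left, hess_smul_right, hww]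
      field_simp
    have hPuv : hessBilin f x uh vh = 0 := by
      rw [hvh, hess_smul_right, hess_symm hfx uh w, hworth, mul_zero]
    obtain ⟨A, hA⟩ : ∃ r : ℝ, r = triLin f x uh uh uh := ⟨_, rfl⟩
    obtain ⟨B, hB⟩ : ∃ r : ℝ, r = triLin f x uh uh vh := ⟨_, rfl⟩
    obtain ⟨C, hC⟩ : ∃ r : ℝ, r = triLin f x uh vh vh := ⟨_, rfl⟩
    obtain ⟨D, hD⟩ : ∃ r : ℝ, r = triLin f x vh vh vh := ⟨_, rfl⟩
    have Hcirc : ∀ c s : ℝ, c^2 + s^2 = 1 → |c^3*A + 3*c^2*s*B + 3*c*s^2*C + s^3*D| ≤ 2 := by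
      intro c s hcs
      have hx := tri_expand hfe c s uh vh
      have hP := hess_expand hfx c s uh vh
      rw [hPuh, hPvh, hPuv] at hP
      have hP1 : hessBilin f x (c • uh + s • vh) (c • uh + s • vh) = 1 := by
        rw [hP]; linarith [hcs]
      have hb := hscx (c • uh + s • vh)
      rw [hP1, hx, ← hA, ← hB, ← hC, ← hD] at hb
      simpa using hb
    have hhval : h = β • uh + η • vh := by rw [hhw, hwval]
    have hPhh2 : hessBilin f x h h = β^2 + η^2 := by rw [hPhh, hww]
    obtain ⟨ρ, hρ⟩ : ∃ r : ℝ, r = Real.sqrt (β^2 + η^2) := ⟨_, rfl⟩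
    have hρpos : 0 < ρ := by rw [hρ]; apply Real.sqrt_pos.2; positivity
    have hρsq : ρ^2 = β^2 + η^2 := by rw [hρ, Real.sq_sqrt (by positivity)]
    have hpq : (β/ρ)^2 + (η/ρ)^2 = 1 := by
      field_simp
      linarith [hρsq]
    have key := plane_lemma A B C D Hcirc (β/ρ) (η/ρ) hpq
    have hBalt : triLin f x vh uh uh = B := by
      rw [tri_symm_12 hfx vh uh uh, tri_symm_23 hfe uh vh uh, hB]
    have hT : triLin f x h u u = nu^2 * (β * A + η * B) := by
      conv_lhs => rw [huval, hhval]
      rw [tri_smul_2, tri_smul_3, tri_add_1, tri_smul_1, tri_smul_1, ← hA, hBalt]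
      ring
    have hβA : β * A + η * B = ρ * ((β/ρ) * A + (η/ρ) * B) := by
      field_simp
    rw [hT, hβA, hPhh2, ← hρ, abs_mul, abs_mul]
    rw [abs_of_nonneg (sq_nonneg nu), abs_of_pos hρpos]
    calc nu^2 * (ρ * |β/ρ * A + η/ρ * B|) ≤ nu^2 * (ρ * 2) := by
          apply mul_le_mul_of_nonneg_left _ (sq_nonneg nu)
          exact mul_le_mul_of_nonneg_left key hρpos.le
      _ = 2 * ρ * nu^2 := by ring
      _ = 2 * ρ * hessBilin f x u u := by rw [huu]

end Mixed

section Deriv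
variable {n : ℕ} {f : (Fin n → ℝ) → ℝ}

lemma hess_line_hasDerivAt {x h : Fin n → ℝ} {t : ℝ} (hfz : ContDiffAt ℝ 3 f (x + t • h))
    (u v : Fin n → ℝ) :
    HasDerivAt (fun s : ℝ => hessBilin f (x + s • h) u v) (triLin f (x + t • h) h u v) t := by
  have hγ : HasDerivAt (fun s : ℝ => x + s • h) h t := by
    simpa using ((hasDerivAt_id t).smul_const h).const_add x
  have hdF : DifferentiableAt ℝ (iteratedFDeriv ℝ 2 f) (x + t • h) :=
    (hfz.iteratedFDeriv_right (m := 1) (by norm_num)).differentiableAt (by norm_num)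
  have h1 : HasFDerivAt (fun z => iteratedFDeriv ℝ 2 f z ![u,v])
      ((fderiv ℝ (iteratedFDeriv ℝ 2 f) (x + t • h)).flipMultilinear ![u,v]) (x + t • h) :=
    hdF.hasFDerivAt.continuousMultilinear_apply_const ![u,v]
  have h2 := h1.comp_hasDerivAt t hγ
  exact h2

lemma rpow_3half (a : ℝ) (ha : 0 ≤ a) : a ^ ((3:ℝ)/2) = Real.sqrt a * a := by
  rcases ha.eq_or_lt with rfl | hpos
  · rw [Real.zero_rpow (by norm_num : ((3:ℝ)/2) ≠ 0)]
    simp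
  · rw [show (3:ℝ)/2 = 1/2 + 1 by norm_num, Real.rpow_add hpos, Real.rpow_one,
      ← Real.sqrt_eq_rpow]

end Deriv

/-- Hessian stability. For `f` self-concordant on open convex `M` and
`x, y ∈ M` with `r = ‖y-x‖_x < 1`, one has
`(1-r)² ∇²f(x) ⪯ ∇²f(y) ⪯ (1-r)⁻² ∇²f(x)` in the Loewner order, i.e. as quadratic
forms. -/
theorem stmt_10 (n : ℕ) (M : Set (Fin n → ℝ)) (hM : IsOpen M) (hMconv : Convex ℝ M)
    (f : (Fin n → ℝ) → ℝ)
    (hf : ∀ x ∈ M, ContDiffAt ℝ 3 f x)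
    (hconv : ConvexOn ℝ M f)
    (hpd : ∀ x ∈ M, ∀ u : Fin n → ℝ, u ≠ 0 → 0 < hessBilin f x u u)
    (hsc : ∀ x ∈ M, ∀ u : Fin n → ℝ,
      |iteratedFDeriv ℝ 3 f x (fun _ => u)| ≤ 2 * hessBilin f x u u ^ ((3 : ℝ) / 2))
    (hdikin : ∀ x ∈ M, ∀ y : Fin n → ℝ,
      Real.sqrt (hessBilin f x (y - x) (y - x)) < 1 → y ∈ M) :
    ∀ x ∈ M, ∀ y ∈ M, ∀ r : ℝ,
      r = Real.sqrt (hessBilin f x (y - x) (y - x)) → r < 1 →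
      ∀ u : Fin n → ℝ,
        (1 - r) ^ 2 * hessBilin f x u u ≤ hessBilin f y u u ∧
        hessBilin f y u u ≤ ((1 - r) ^ 2)⁻¹ * hessBilin f x u u := by
  intro x hx y hy r hr hr1 u
  rcases eq_or_ne y x with rfl | hne
  · rw [sub_self, hess_zero_left, Real.sqrt_zero] at hr
    subst hr
    norm_num
  have hvne : y - x ≠ 0 := sub_ne_zero.2 hne
  have hr0 : 0 < r := hr ▸ Real.sqrt_pos.2 (hpd x hx _ hvne)
  have h1r : 1 < r⁻¹ := by rw [← one_div, lt_div_iff₀ hr0]; linarith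
  have hseg : ∀ t ∈ Set.Icc (0:ℝ) 1, x + t • (y - x) ∈ M := fun t ht =>
    hMconv.add_smul_sub_mem hx hy ht
  have hfe : ∀ t ∈ Set.Icc (0:ℝ) 1, ∀ᶠ z in nhds (x + t • (y - x)), ContDiffAt ℝ 3 f z := by
    intro t ht
    filter_upwards [hM.mem_nhds (hseg t ht)] with z hz
    exact hf z hz
  have hγ0 : x + (0:ℝ) • (y - x) = x := by simp
  have hγ1 : x + (1:ℝ) • (y - x) = y := by simp
  have h0mem : (0:ℝ) ∈ Set.Icc (0:ℝ) 1 := by norm_num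
  have h1mem : (1:ℝ) ∈ Set.Icc (0:ℝ) 1 := by norm_num
  -- sigma and its derivative
  obtain ⟨σ, hσ⟩ : ∃ F : ℝ → ℝ, F = fun t => hessBilin f (x + t • (y - x)) (y - x) (y - x) :=
    ⟨_, rfl⟩
  obtain ⟨Tσ, hTσ⟩ : ∃ F : ℝ → ℝ, F = fun t =>
      triLin f (x + t • (y - x)) (y - x) (y - x) (y - x) := ⟨_, rfl⟩
  have hσd : ∀ t ∈ Set.Icc (0:ℝ) 1, HasDerivAt σ (Tσ t) t := by
    intro t ht
    rw [hσ, hTσ]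
    exact hess_line_hasDerivAt (hf _ (hseg t ht)) _ _
  have hσpos : ∀ t ∈ Set.Icc (0:ℝ) 1, 0 < σ t := by
    intro t ht; rw [hσ]; exact hpd _ (hseg t ht) _ hvne
  have hσ0 : σ 0 = hessBilin f x (y - x) (y - x) := by rw [hσ]; simp only [hγ0]
  have hrσ : r = Real.sqrt (σ 0) := by rw [hσ0, hr]
  have hTσb : ∀ t ∈ Set.Icc (0:ℝ) 1, |Tσ t| ≤ 2 * (Real.sqrt (σ t) * σ t) := by
    intro t ht
    have h1 := hsc _ (hseg t ht) (y - x)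
    rw [tri_diag, rpow_3half _ (hess_nonneg (hpd _ (hseg t ht)) _)] at h1
    rw [hTσ, hσ]
    exact h1
  -- monotone auxiliary function V
  obtain ⟨V, hV⟩ : ∃ F : ℝ → ℝ, F = fun t => (Real.sqrt (σ t))⁻¹ + t := ⟨_, rfl⟩
  obtain ⟨Vd, hVdd⟩ : ∃ F : ℝ → ℝ, F = fun t =>
      -(Tσ t / (2 * Real.sqrt (σ t))) / (Real.sqrt (σ t))^2 + 1 := ⟨_, rfl⟩
  have hVd : ∀ t ∈ Set.Icc (0:ℝ) 1, HasDerivAt V (Vd t) t := by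
    intro t ht
    rw [hV, hVdd]
    exact (((hσd t ht).sqrt (hσpos t ht).ne').inv
      (Real.sqrt_ne_zero'.2 (hσpos t ht))).add (hasDerivAt_id t)
  have hVdnn : ∀ t ∈ Set.Icc (0:ℝ) 1, 0 ≤ Vd t := by
    intro t ht
    simp only [hVdd]
    have hs : 0 < Real.sqrt (σ t) := Real.sqrt_pos.2 (hσpos t ht)
    have hsq : (Real.sqrt (σ t))^2 = σ t := Real.sq_sqrt (hσpos t ht).le
    have hb := (abs_le.1 (hTσb t ht)).2
    have key : Tσ t / (2 * Real.sqrt (σ t)) / (Real.sqrt (σ t))^2 ≤ 1 := by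
      rw [div_div, div_le_one (by positivity)]
      calc Tσ t ≤ 2 * (Real.sqrt (σ t) * σ t) := hb
        _ = 2 * Real.sqrt (σ t) * (Real.sqrt (σ t))^2 := by rw [hsq]; ring
    have : -(Tσ t / (2 * Real.sqrt (σ t))) / (Real.sqrt (σ t))^2
        = -(Tσ t / (2 * Real.sqrt (σ t)) / (Real.sqrt (σ t))^2) := by ring
    rw [this]
    linarith
  have hVmono : MonotoneOn V (Set.Icc 0 1) :=
    monotoneOn_of_hasDerivWithinAt_nonneg (f' := Vd) (convex_Icc 0 1)
      (fun t ht => (hVd t ht).continuousAt.continuousWithinAt)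
      (fun t ht => (hVd t (interior_subset ht)).hasDerivWithinAt)
      (fun t ht => hVdnn t (interior_subset ht))
  have hσub : ∀ t ∈ Set.Icc (0:ℝ) 1, Real.sqrt (σ t) ≤ (r⁻¹ - t)⁻¹ := by
    intro t ht
    have hts : 0 < r⁻¹ - t := by
      have := ht.2; linarith
    have hmon := hVmono h0mem ht ht.1
    rw [hV] at hmon
    simp only [add_zero] at hmon
    have hV0 : (Real.sqrt (σ 0))⁻¹ = r⁻¹ := by rw [hrσ]
    rw [hV0] at hmon
    have hlb : r⁻¹ - t ≤ (Real.sqrt (σ t))⁻¹ := by linarith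
    have hs : 0 < Real.sqrt (σ t) := Real.sqrt_pos.2 (hσpos t ht)
    calc Real.sqrt (σ t) = ((Real.sqrt (σ t))⁻¹)⁻¹ := (inv_inv _).symm
      _ ≤ (r⁻¹ - t)⁻¹ := by
          apply inv_anti₀ hts hlb
  have hratio : ∀ t ∈ Set.Icc (0:ℝ) 1, 0 < 1 - r * t := by
    intro t ht
    nlinarith [ht.1, ht.2]
  have hratio2 : ∀ t ∈ Set.Icc (0:ℝ) 1, (r⁻¹ - t)⁻¹ = r / (1 - r * t) := by
    intro t ht
    rw [show r⁻¹ - t = (1 - r * t)/r by field_simp, inv_div]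
  -- handle u = 0
  rcases eq_or_ne u 0 with rfl | hu
  · rw [hess_zero_left x 0, hess_zero_left y 0]
    constructor <;> simp
  -- the g function
  obtain ⟨g, hg⟩ : ∃ F : ℝ → ℝ, F = fun t => hessBilin f (x + t • (y - x)) u u := ⟨_, rfl⟩
  obtain ⟨Tg, hTg⟩ : ∃ F : ℝ → ℝ, F = fun t =>
      triLin f (x + t • (y - x)) (y - x) u u := ⟨_, rfl⟩
  have hgd : ∀ t ∈ Set.Icc (0:ℝ) 1, HasDerivAt g (Tg t) t := by
    intro t ht
    rw [hg, hTg]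
    exact hess_line_hasDerivAt (hf _ (hseg t ht)) _ _
  have hgpos : ∀ t ∈ Set.Icc (0:ℝ) 1, 0 < g t := by
    intro t ht; rw [hg]; exact hpd _ (hseg t ht) _ hu
  have hg0 : g 0 = hessBilin f x u u := by rw [hg]; simp only [hγ0]
  have hg1 : g 1 = hessBilin f y u u := by rw [hg]; simp only [hγ1]
  have hTgb : ∀ t ∈ Set.Icc (0:ℝ) 1, |Tg t| ≤ 2 * Real.sqrt (σ t) * g t := by
    intro t ht
    have hscz : ∀ w : Fin n → ℝ, |triLin f (x + t • (y - x)) w w w|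
        ≤ 2 * hessBilin f (x + t • (y - x)) w w ^ ((3:ℝ)/2) := by
      intro w
      have := hsc _ (hseg t ht) w
      rwa [tri_diag] at this
    have := mixed_bound (hfe t ht) (hpd _ (hseg t ht)) hscz (y - x) u
    rw [hTg, hg, hσ]
    exact this
  have hTgb2 : ∀ t ∈ Set.Icc (0:ℝ) 1, |Tg t / g t| ≤ 2 * (r / (1 - r * t)) := by
    intro t ht
    rw [abs_div, abs_of_pos (hgpos t ht), div_le_iff₀ (hgpos t ht)]
    calc |Tg t| ≤ 2 * Real.sqrt (σ t) * g t := hTgb t ht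
      _ ≤ 2 * (r / (1 - r * t)) * g t := by
          apply mul_le_mul_of_nonneg_right _ (hgpos t ht).le
          have := hσub t ht
          rw [hratio2 t ht] at this
          linarith
  -- the two monotone functions
  obtain ⟨P1, hP1⟩ : ∃ F : ℝ → ℝ, F = fun t =>
      (-2) * Real.log (1 - r * t) - Real.log (g t) := ⟨_, rfl⟩
  obtain ⟨P2, hP2⟩ : ∃ F : ℝ → ℝ, F = fun t =>
      (-2) * Real.log (1 - r * t) + Real.log (g t) := ⟨_, rfl⟩
  obtain ⟨P1d, hP1d⟩ : ∃ F : ℝ → ℝ, F = fun t =>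
      (-2) * (-r / (1 - r * t)) - Tg t / g t := ⟨_, rfl⟩
  obtain ⟨P2d, hP2d⟩ : ∃ F : ℝ → ℝ, F = fun t =>
      (-2) * (-r / (1 - r * t)) + Tg t / g t := ⟨_, rfl⟩
  have hinner : ∀ t : ℝ, HasDerivAt (fun s => 1 - r * s) (-r) t := by
    intro t
    simpa using ((hasDerivAt_id t).const_mul r).const_sub 1
  have hlogd : ∀ t ∈ Set.Icc (0:ℝ) 1,
      HasDerivAt (fun s => Real.log (1 - r * s)) (-r / (1 - r * t)) t := by
    intro t ht
    exact (hinner t).log (hratio t ht).ne'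
  have hP1dh : ∀ t ∈ Set.Icc (0:ℝ) 1, HasDerivAt P1 (P1d t) t := by
    intro t ht
    rw [hP1, hP1d]
    exact (((hlogd t ht).const_mul (-2))).sub ((hgd t ht).log (hgpos t ht).ne')
  have hP2dh : ∀ t ∈ Set.Icc (0:ℝ) 1, HasDerivAt P2 (P2d t) t := by
    intro t ht
    rw [hP2, hP2d]
    exact (((hlogd t ht).const_mul (-2))).add ((hgd t ht).log (hgpos t ht).ne')
  have hP1nn : ∀ t ∈ Set.Icc (0:ℝ) 1, 0 ≤ P1d t := by
    intro t ht
    simp only [hP1d]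
    have h1 := (abs_le.1 (hTgb2 t ht)).2
    have : (-2 : ℝ) * (-r / (1 - r * t)) = 2 * (r / (1 - r * t)) := by ring
    rw [this]
    linarith
  have hP2nn : ∀ t ∈ Set.Icc (0:ℝ) 1, 0 ≤ P2d t := by
    intro t ht
    simp only [hP2d]
    have h1 := (abs_le.1 (hTgb2 t ht)).1
    have : (-2 : ℝ) * (-r / (1 - r * t)) = 2 * (r / (1 - r * t)) := by ring
    rw [this]
    linarith
  have hP1mono : MonotoneOn P1 (Set.Icc 0 1) :=
    monotoneOn_of_hasDerivWithinAt_nonneg (convex_Icc 0 1)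
      (fun t ht => (hP1dh t ht).continuousAt.continuousWithinAt)
      (fun t ht => ((hP1dh t (interior_subset ht)).hasDerivWithinAt))
      (fun t ht => hP1nn t (interior_subset ht))
  have hP2mono : MonotoneOn P2 (Set.Icc 0 1) :=
    monotoneOn_of_hasDerivWithinAt_nonneg (convex_Icc 0 1)
      (fun t ht => (hP2dh t ht).continuousAt.continuousWithinAt)
      (fun t ht => ((hP2dh t (interior_subset ht)).hasDerivWithinAt))
      (fun t ht => hP2nn t (interior_subset ht))
  have e1 := hP1mono h0mem h1mem zero_le_one
  have e2 := hP2mono h0mem h1mem zero_le_one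
  simp only [hP1, mul_zero, mul_one, sub_zero, Real.log_one, zero_sub, neg_neg] at e1
  simp only [hP2, mul_zero, mul_one, sub_zero, Real.log_one, zero_sub, neg_neg] at e2
  have ha : 0 < 1 - r := by linarith
  constructor
  · rw [← hg0, ← hg1]
    have hlog2 : Real.log ((1-r)^2 * g 0) = 2 * Real.log (1-r) + Real.log (g 0) := by
      rw [Real.log_mul (pow_ne_zero 2 ha.ne') (hgpos 0 h0mem).ne', Real.log_pow]
      norm_num
    calc (1-r)^2 * g 0 = Real.exp (Real.log ((1-r)^2 * g 0)) :=
        (Real.exp_log (mul_pos (pow_pos ha 2) (hgpos 0 h0mem))).symm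
      _ ≤ Real.exp (Real.log (g 1)) := by
          apply Real.exp_le_exp.2
          rw [hlog2]
          linarith [e2]
      _ = g 1 := Real.exp_log (hgpos 1 h1mem)
  · rw [← hg0, ← hg1]
    have hpos3 : 0 < ((1-r)^2)⁻¹ * g 0 :=
      mul_pos (inv_pos.2 (pow_pos ha 2)) (hgpos 0 h0mem)
    have hlog3 : Real.log (((1-r)^2)⁻¹ * g 0) = -(2 * Real.log (1-r)) + Real.log (g 0) := by
      rw [Real.log_mul (inv_ne_zero (pow_ne_zero 2 ha.ne')) (hgpos 0 h0mem).ne', Real.log_inv, Real.log_pow]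
      norm_num
    calc g 1 = Real.exp (Real.log (g 1)) := (Real.exp_log (hgpos 1 h1mem)).symm
      _ ≤ Real.exp (Real.log (((1-r)^2)⁻¹ * g 0)) := by
          apply Real.exp_le_exp.2
          rw [hlog3]
          linarith [e1]
      _ = ((1-r)^2)⁻¹ * g 0 := Real.exp_log hpos3
end
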